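/- The algebra morphism r: ℤG → ℤ⟨⟨x₁,…,xₙ⟩⟩ induced by the group morphism gᵢ ↦ 1+xᵢ (G the free group on g₁,…,gₙ, target the ring of noncommutative formal power series over ℤ) is injective. -/

import Mathlib

noncomputable section

/-- The coefficient, at the word `w` in the (noncommuting) variables `x₁, …, xₙ`, of the
Magnus expansion of a reduced group word `l` in the free group on `g₁, …, gₙ`, obtained by
substituting `gᵢ ↦ 1 + xᵢ` (and `gᵢ⁻¹ ↦ (1 + xᵢ)⁻¹ = 1 - xᵢ(1 + xᵢ)⁻¹`). -/
def Ecoef {n : ℕ} : List (Fin n × Bool) → List (Fin n) → ℤ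
  | [], [] => 1
  | [], _ :: _ => 0
  | _ :: rest, [] => Ecoef rest []
  | (i, true) :: rest, j :: w =>
      Ecoef rest (j :: w) + (if j = i then Ecoef rest w else 0)
  | (i, false) :: rest, j :: w =>
      Ecoef rest (j :: w) - (if j = i then Ecoef ((i, false) :: rest) w else 0)
  termination_by l w => (w.length, l.length)


theorem Ecoef_nil {n : ℕ} : ∀ l : List (Fin n × Bool), Ecoef l [] = 1
  | [] => by rw [Ecoef]
  | (i,b) :: rest => by
      have := Ecoef_nil rest
      cases b <;> simp [Ecoef, this]

@[simp] theorem Ecoef_nil' {n : ℕ} (l : List (Fin n × Bool)) : Ecoef l [] = 1 := Ecoef_nil l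

@[simp] theorem Ecoef_empty {n : ℕ} (j : Fin n) (w : List (Fin n)) : Ecoef [] (j :: w) = 0 := by
  simp [Ecoef]

theorem Ecoef_pos {n : ℕ} (i : Fin n) (rest : List (Fin n × Bool)) (j : Fin n) (w : List (Fin n)) :
    Ecoef ((i, true) :: rest) (j :: w) =
      Ecoef rest (j :: w) + (if j = i then Ecoef rest w else 0) := by
  simp [Ecoef]

theorem Ecoef_neg {n : ℕ} (i : Fin n) (rest : List (Fin n × Bool)) (j : Fin n) (w : List (Fin n)) :
    Ecoef ((i, false) :: rest) (j :: w) =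
      Ecoef rest (j :: w) - (if j = i then Ecoef ((i, false) :: rest) w else 0) := by
  rw [Ecoef]

theorem Ecoef_append {n : ℕ} : ∀ (w : List (Fin n)) (l₁ l₂ : List (Fin n × Bool)),
    Ecoef (l₁ ++ l₂) w =
      ∑ k ∈ Finset.range (w.length + 1), Ecoef l₁ (w.take k) * Ecoef l₂ (w.drop k)
  | w, [], l₂ => by
      cases w with
      | nil => simp
      | cons j w' =>
          rw [Finset.sum_range_succ']
          simp
  | [], (i,b)::rest, l₂ => by simp
  | j::w', (i,true)::rest, l₂ => by
      rw [List.cons_append, Ecoef_pos, Ecoef_append (j::w') rest l₂, Ecoef_append w' rest l₂]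
      conv_lhs => rw [Finset.sum_range_succ']
      conv_rhs => rw [Finset.sum_range_succ']
      simp only [List.take_succ_cons, List.drop_succ_cons, List.take_zero, List.drop_zero,
        Ecoef_nil', one_mul, List.length_cons, Ecoef_pos]
      by_cases hji : j = i
      · simp only [hji, if_true, add_mul, Finset.sum_add_distrib]
        ring
      · simp only [if_neg hji, add_zero]
  | j::w', (i,false)::rest, l₂ => by
      have h2 := Ecoef_append w' ((i,false)::rest) l₂
      rw [List.cons_append] at h2
      rw [List.cons_append, Ecoef_neg, Ecoef_append (j::w') rest l₂, h2]
      conv_lhs => rw [Finset.sum_range_succ']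
      conv_rhs => rw [Finset.sum_range_succ']
      simp only [List.take_succ_cons, List.drop_succ_cons, List.take_zero, List.drop_zero,
        Ecoef_nil', one_mul, List.length_cons, Ecoef_neg]
      by_cases hji : j = i
      · simp only [hji, if_true, sub_mul, Finset.sum_sub_distrib]
        ring
      · simp only [if_neg hji, sub_zero]
  termination_by w l₁ _ => (w.length, l₁.length)

theorem Ecoef_cancel_pos {n : ℕ} (x : Fin n) (L : List (Fin n × Bool)) (w : List (Fin n)) :
    Ecoef ((x, true) :: (x, false) :: L) w = Ecoef L w := by
  cases w with
  | nil => simp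
  | cons j w' =>
      rw [Ecoef_pos, Ecoef_neg]
      ring

theorem Ecoef_cancel_neg {n : ℕ} (x : Fin n) (L : List (Fin n × Bool)) :
    ∀ w : List (Fin n), Ecoef ((x, false) :: (x, true) :: L) w = Ecoef L w := by
  intro w
  induction w with
  | nil => simp
  | cons j w' ih =>
      rw [Ecoef_neg, Ecoef_pos]
      by_cases hji : j = x
      · simp [hji, ih]
      · simp [if_neg hji]

theorem Ecoef_step {n : ℕ} {L₁ L₂ : List (Fin n × Bool)} (h : FreeGroup.Red.Step L₁ L₂) :
    ∀ w, Ecoef L₁ w = Ecoef L₂ w := by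
  cases h with
  | @not La Lb x b =>
      intro w
      rw [Ecoef_append, Ecoef_append]
      refine Finset.sum_congr rfl fun k _ => ?_
      congr 1
      cases b
      · exact Ecoef_cancel_neg x Lb _
      · exact Ecoef_cancel_pos x Lb _

theorem Ecoef_red {n : ℕ} {L₁ L₂ : List (Fin n × Bool)} (h : FreeGroup.Red L₁ L₂) :
    ∀ w, Ecoef L₁ w = Ecoef L₂ w := by
  induction h with
  | refl => intro w; rfl
  | tail _ hstep ih => intro w; rw [ih w, Ecoef_step hstep w]

theorem Ecoef_mk {n : ℕ} (L : List (Fin n × Bool)) (w : List (Fin n)) :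
    Ecoef (FreeGroup.mk L).toWord w = Ecoef L w := by
  rw [FreeGroup.toWord_mk]
  exact (Ecoef_red (FreeGroup.reduce.red) w).symm

def magnus' (n : ℕ) (f : MonoidAlgebra ℤ (FreeGroup (Fin n))) : List (Fin n) → ℤ :=
  fun w => f.coeff.sum fun g z => z * Ecoef g.toWord w

theorem magnus'_eq {n : ℕ} (f : MonoidAlgebra ℤ (FreeGroup (Fin n))) (w : List (Fin n)) :
    magnus' n f w =
      Finsupp.linearCombination ℤ (fun g : FreeGroup (Fin n) => Ecoef g.toWord w) f.coeff := by
  rw [Finsupp.linearCombination_apply]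
  simp [magnus', Finsupp.sum, smul_eq_mul]

theorem magnus'_single {n : ℕ} (g : FreeGroup (Fin n)) (z : ℤ) (w : List (Fin n)) :
    magnus' n (MonoidAlgebra.single g z) w = z * Ecoef g.toWord w := by
  simp [magnus'_eq]

theorem magnus'_add {n : ℕ} (f f' : MonoidAlgebra ℤ (FreeGroup (Fin n))) (w : List (Fin n)) :
    magnus' n (f + f') w = magnus' n f w + magnus' n f' w := by
  simp [magnus'_eq]

theorem magnus'_zero {n : ℕ} (w : List (Fin n)) : magnus' n 0 w = 0 := by
  simp [magnus'_eq]

theorem magnus'_one {n : ℕ} : magnus' n 1 = fun w => if w = [] then 1 else 0 := by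
  funext w
  rw [MonoidAlgebra.one_def, magnus'_single, FreeGroup.toWord_one]
  cases w <;> simp [Ecoef]

theorem magnus'_mul {n : ℕ} (f f' : MonoidAlgebra ℤ (FreeGroup (Fin n))) (w : List (Fin n)) :
    magnus' n (f * f') w =
      ∑ k ∈ Finset.range (w.length + 1),
        magnus' n f (w.take k) * magnus' n f' (w.drop k) := by
  induction f using MonoidAlgebra.induction_linear with
  | zero => simp [magnus'_zero]
  | add f₁ f₂ ih1 ih2 =>
      rw [add_mul, magnus'_add, ih1, ih2, ← Finset.sum_add_distrib]
      refine Finset.sum_congr rfl fun k _ => ?_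
      rw [magnus'_add]
      ring
  | single g z =>
      induction f' using MonoidAlgebra.induction_linear with
      | zero => simp [magnus'_zero]
      | add f₁ f₂ ih1 ih2 =>
          rw [mul_add, magnus'_add, ih1, ih2, ← Finset.sum_add_distrib]
          refine Finset.sum_congr rfl fun k _ => ?_
          rw [magnus'_add]
          ring
      | single g' z' =>
          rw [MonoidAlgebra.single_mul_single, magnus'_single]
          have hgg : g * g' = FreeGroup.mk (g.toWord ++ g'.toWord) := by
            rw [← FreeGroup.mul_mk, FreeGroup.mk_toWord, FreeGroup.mk_toWord]
          rw [hgg, Ecoef_mk, Ecoef_append, Finset.mul_sum]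
          refine Finset.sum_congr rfl fun k _ => ?_
          rw [magnus'_single, magnus'_single]
          ring

theorem magnus'_smul {n : ℕ} (z : ℤ) (f : MonoidAlgebra ℤ (FreeGroup (Fin n))) (w : List (Fin n)) :
    magnus' n (z • f) w = z * magnus' n f w := by
  rw [magnus'_eq, magnus'_eq, MonoidAlgebra.coeff_smul, map_smul, smul_eq_mul]

theorem magnus'_sub {n : ℕ} (f f' : MonoidAlgebra ℤ (FreeGroup (Fin n))) (w : List (Fin n)) :
    magnus' n (f - f') w = magnus' n f w - magnus' n f' w := by
  simp [magnus'_eq, MonoidAlgebra.coeff_sub]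

theorem magnus'_finsuppSum {n : ℕ} {ι : Type*} {β : Type*} [AddCommMonoid β]
    (f : ι →₀ β) (F : ι → β → MonoidAlgebra ℤ (FreeGroup (Fin n))) (w : List (Fin n)) :
    magnus' n (f.sum F) w = f.sum fun g z => magnus' n (F g z) w := by
  classical
  simp only [magnus'_eq]
  rw [MonoidAlgebra.coeff_finsuppSum]
  exact map_finsuppSum _ _ _

def Dw {n : ℕ} (i : Fin n) : List (Fin n × Bool) → MonoidAlgebra ℤ (FreeGroup (Fin n))
  | [] => 0
  | (j, true) :: l =>
      (if i = j then MonoidAlgebra.single (FreeGroup.mk l) 1 else 0) + Dw i l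
  | (j, false) :: l =>
      -(if i = j then MonoidAlgebra.single (FreeGroup.mk ((j, false) :: l)) 1 else 0) + Dw i l

theorem magnus'_Dw {n : ℕ} (i : Fin n) :
    ∀ (l : List (Fin n × Bool)) (w : List (Fin n)),
      Ecoef l (i :: w) = magnus' n (Dw i l) w := by
  intro l
  induction l with
  | nil => intro w; simp [Dw, magnus'_zero]
  | cons a l ih =>
      obtain ⟨j, b⟩ := a
      intro w
      cases b
      · rw [Ecoef_neg, Dw, magnus'_add, ← neg_one_smul ℤ
          (if i = j then MonoidAlgebra.single (FreeGroup.mk ((j, false) :: l)) (1:ℤ) else 0),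
          magnus'_smul, ← ih w]
        by_cases hij : i = j
        · subst hij
          rw [if_pos rfl, if_pos rfl, magnus'_single, Ecoef_mk]
          ring
        · rw [if_neg hij, if_neg hij, magnus'_zero]
          ring
      · rw [Ecoef_pos, Dw, magnus'_add, ← ih w]
        by_cases hij : i = j
        · subst hij
          rw [if_pos rfl, if_pos rfl, magnus'_single, Ecoef_mk]
          ring
        · rw [if_neg hij, if_neg hij, magnus'_zero]
          ring

def D {n : ℕ} (i : Fin n) (f : MonoidAlgebra ℤ (FreeGroup (Fin n))) :
    MonoidAlgebra ℤ (FreeGroup (Fin n)) :=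
  f.coeff.sum fun g z => z • Dw i g.toWord

theorem magnus'_cons {n : ℕ} (i : Fin n) (f : MonoidAlgebra ℤ (FreeGroup (Fin n)))
    (w : List (Fin n)) : magnus' n f (i :: w) = magnus' n (D i f) w := by
  rw [D, magnus'_finsuppSum]
  show (f.coeff.sum fun g z => z * Ecoef g.toWord (i :: w)) = _
  refine Finsupp.sum_congr fun g _ => ?_
  rw [magnus'_Dw, magnus'_smul]

theorem mk_cons_cancel {n : ℕ} (j : Fin n) (l : List (Fin n × Bool)) :
    FreeGroup.mk ((j, true) :: (j, false) :: l) = FreeGroup.mk l := by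
  rw [← FreeGroup.quot_mk_eq_mk, ← FreeGroup.quot_mk_eq_mk]
  exact Quot.sound (@FreeGroup.Red.Step.cons_not _ l j true)

theorem of_mul_mk {n : ℕ} (j : Fin n) (l : List (Fin n × Bool)) :
    FreeGroup.of j * FreeGroup.mk l = FreeGroup.mk ((j, true) :: l) := by
  rw [FreeGroup.of, FreeGroup.mul_mk]
  rfl

theorem fund_w {n : ℕ} : ∀ l : List (Fin n × Bool),
    MonoidAlgebra.single (FreeGroup.mk l) (1 : ℤ) =
      1 + ∑ i : Fin n, (MonoidAlgebra.single (FreeGroup.of i) 1 - 1) * Dw i l := by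
  intro l
  induction l with
  | nil =>
      simp only [Dw, mul_zero, Finset.sum_const_zero, add_zero]
      rw [MonoidAlgebra.one_def]
      rfl
  | cons a l ih =>
      obtain ⟨j, b⟩ := a
      cases b
      · simp only [Dw, mul_add, mul_neg, Finset.sum_add_distrib, Finset.sum_neg_distrib]
        have hsum : ∑ i : Fin n, (MonoidAlgebra.single (FreeGroup.of i) (1:ℤ) - 1) *
            (if i = j then MonoidAlgebra.single (FreeGroup.mk ((j, false) :: l)) 1 else 0) =
            (MonoidAlgebra.single (FreeGroup.of j) (1:ℤ) - 1) *
              MonoidAlgebra.single (FreeGroup.mk ((j, false) :: l)) 1 := by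
          simp only [mul_ite, mul_zero, Finset.sum_ite_eq', Finset.mem_univ, if_true]
        rw [hsum, sub_mul, one_mul]
        have hmul : MonoidAlgebra.single (FreeGroup.of j) (1:ℤ) *
            MonoidAlgebra.single (FreeGroup.mk ((j, false) :: l)) 1 =
            MonoidAlgebra.single (FreeGroup.mk l) 1 := by
          rw [MonoidAlgebra.single_mul_single, one_mul, of_mul_mk, mk_cons_cancel]
        rw [hmul, ih]
        abel
      · simp only [Dw, mul_add, Finset.sum_add_distrib]
        have hsum : ∑ i : Fin n, (MonoidAlgebra.single (FreeGroup.of i) (1:ℤ) - 1) *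
            (if i = j then MonoidAlgebra.single (FreeGroup.mk l) 1 else 0) =
            (MonoidAlgebra.single (FreeGroup.of j) (1:ℤ) - 1) *
              MonoidAlgebra.single (FreeGroup.mk l) 1 := by
          simp only [mul_ite, mul_zero, Finset.sum_ite_eq', Finset.mem_univ, if_true]
        rw [hsum, sub_mul, one_mul]
        have hmul : MonoidAlgebra.single (FreeGroup.of j) (1:ℤ) *
            MonoidAlgebra.single (FreeGroup.mk l) 1 =
            MonoidAlgebra.single (FreeGroup.mk ((j, true) :: l)) 1 := by
          rw [MonoidAlgebra.single_mul_single, one_mul, of_mul_mk]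
        rw [hmul, ih]
        abel

theorem D_add {n : ℕ} (i : Fin n) (f f' : MonoidAlgebra ℤ (FreeGroup (Fin n))) :
    D i (f + f') = D i f + D i f' := by
  unfold D
  rw [MonoidAlgebra.coeff_add]
  exact Finsupp.sum_add_index' (fun g => by simp) (fun g z z' => add_smul z z' _)

theorem D_single {n : ℕ} (i : Fin n) (g : FreeGroup (Fin n)) (z : ℤ) :
    D i (MonoidAlgebra.single g z) = z • Dw i g.toWord := by
  unfold D
  exact MonoidAlgebra.sum_single_index (by simp)

theorem fund {n : ℕ} (f : MonoidAlgebra ℤ (FreeGroup (Fin n))) :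
    f = (magnus' n f []) • (1 : MonoidAlgebra ℤ (FreeGroup (Fin n))) +
      ∑ i : Fin n, (MonoidAlgebra.single (FreeGroup.of i) 1 - 1) * D i f := by
  induction f using MonoidAlgebra.induction_linear with
  | zero => simp [magnus'_zero, D, Finsupp.sum_zero_index]
  | add f₁ f₂ ih1 ih2 =>
      conv_lhs => rw [ih1, ih2]
      rw [magnus'_add]
      have hD : ∀ x : Fin n, D x (f₁ + f₂) = D x f₁ + D x f₂ := fun x => D_add x f₁ f₂
      simp only [hD, mul_add, Finset.sum_add_distrib, add_smul]
      abel
  | single g z =>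
      rw [magnus'_single, Ecoef_nil', mul_one]
      simp only [D_single]
      have : (MonoidAlgebra.single g z : MonoidAlgebra ℤ (FreeGroup (Fin n))) =
          z • MonoidAlgebra.single g (1:ℤ) := by
        rw [MonoidAlgebra.smul_single, smul_eq_mul, mul_one]
      rw [this]
      conv_lhs => rw [← FreeGroup.mk_toWord (x := g), fund_w g.toWord]
      rw [smul_add, Finset.smul_sum]
      congr 1
      refine Finset.sum_congr rfl fun i _ => ?_
      rw [mul_smul_comm]

theorem Dw_apply_ge {n : ℕ} (i : Fin n) :
    ∀ (l : List (Fin n × Bool)) (g₀ : FreeGroup (Fin n)), l.length ≤ g₀.toWord.length →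
      (Dw i l).coeff g₀ = if g₀ = FreeGroup.mk l ∧ l.head? = some (i, false) then -1 else 0 := by
  intro l
  induction l with
  | nil => intro g₀ _; simp [Dw]
  | cons a l ih =>
      obtain ⟨j, b⟩ := a
      intro g₀ hlen
      rw [List.length_cons] at hlen
      have hlt : l.length < g₀.toWord.length := lt_of_lt_of_le (Nat.lt_succ_self _) hlen
      have hne : g₀ ≠ FreeGroup.mk l := by
        intro h
        have h1 : (FreeGroup.mk l).toWord.length ≤ l.length := FreeGroup.norm_mk_le
        rw [← h] at h1
        omega
      have htail0 : (Dw i l).coeff g₀ = 0 := by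
        rw [ih g₀ (le_of_lt hlt), if_neg]
        exact fun hc => hne hc.1
      cases b
      · rw [Dw, MonoidAlgebra.coeff_add, Finsupp.add_apply, MonoidAlgebra.coeff_neg, Finsupp.neg_apply, htail0, add_zero,
          apply_ite (fun v : MonoidAlgebra ℤ (FreeGroup (Fin n)) => v.coeff g₀)]
        simp only [MonoidAlgebra.coeff_zero, MonoidAlgebra.coeff_single, Finsupp.zero_apply, Finsupp.single_apply, List.head?_cons, Option.some_inj,
          Prod.mk.injEq, and_true]
        by_cases hij : i = j
        · subst hij
          by_cases hgg : FreeGroup.mk ((i, false) :: l) = g₀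
          · simp [hgg]
          · have hgg' : ¬ g₀ = FreeGroup.mk ((i, false) :: l) := fun h => hgg h.symm
            simp [hgg, hgg']
        · have hji : ¬ j = i := fun h => hij h.symm
          simp [hij, hji]
      · rw [Dw, MonoidAlgebra.coeff_add, Finsupp.add_apply, htail0, add_zero,
          apply_ite (fun v : MonoidAlgebra ℤ (FreeGroup (Fin n)) => v.coeff g₀)]
        have hsingle0 : (MonoidAlgebra.single (FreeGroup.mk l) (1:ℤ)).coeff g₀ = 0 := by
          rw [MonoidAlgebra.coeff_single, Finsupp.single_apply, if_neg (fun hc => hne hc.symm)]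
        rw [hsingle0]
        simp

theorem D_apply_ge {n : ℕ} (i : Fin n) (f : MonoidAlgebra ℤ (FreeGroup (Fin n))) {M : ℕ}
    (hf : ∀ g ∈ f.coeff.support, g.toWord.length ≤ M) (g₀ : FreeGroup (Fin n))
    (hg : M ≤ g₀.toWord.length) :
    (D i f).coeff g₀ = if g₀.toWord.head? = some (i, false) then -f.coeff g₀ else 0 := by
  classical
  rw [D, MonoidAlgebra.coeff_finsuppSum, Finsupp.sum_apply, Finsupp.sum]
  have hterm : ∀ g ∈ f.coeff.support, (f.coeff g • Dw i g.toWord).coeff g₀ =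
      if g = g₀ then (if g₀.toWord.head? = some (i, false) then -f.coeff g else 0) else 0 := by
    intro g hgs
    rw [MonoidAlgebra.coeff_smul, Finsupp.smul_apply, Dw_apply_ge i g.toWord g₀ (le_trans (hf g hgs) hg)]
    by_cases hgg : g = g₀
    · subst hgg
      rw [if_pos rfl]
      by_cases hh : g.toWord.head? = some (i, false)
      · rw [if_pos ⟨(FreeGroup.mk_toWord).symm, hh⟩, if_pos hh]
        simp
      · rw [if_neg (fun hc => hh hc.2), if_neg hh, smul_zero]
    · rw [if_neg hgg, if_neg, smul_zero]
      rintro ⟨hc, -⟩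
      exact hgg (by rw [← FreeGroup.mk_toWord (x := g), ← hc])
  rw [Finset.sum_congr rfl hterm, Finset.sum_ite_eq' f.coeff.support g₀]
  by_cases hmem : g₀ ∈ f.coeff.support
  · rw [if_pos hmem]
  · rw [if_neg hmem]
    have h0 : f.coeff g₀ = 0 := Finsupp.notMem_support_iff.mp hmem
    rw [h0]
    simp

theorem D_support_le {n : ℕ} (i : Fin n) (f : MonoidAlgebra ℤ (FreeGroup (Fin n))) {M : ℕ}
    (hf : ∀ g ∈ f.coeff.support, g.toWord.length ≤ M) :
    ∀ g₀ ∈ (D i f).coeff.support, g₀.toWord.length ≤ M := by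
  intro g₀ hg₀
  by_contra hlt
  push_neg at hlt
  have h1 := D_apply_ge i f hf g₀ (le_of_lt hlt)
  have h2 : f.coeff g₀ = 0 := by
    rw [← Finsupp.notMem_support_iff]
    intro hmem
    exact absurd (hf g₀ hmem) (by omega)
  rw [h2, neg_zero, ite_self] at h1
  exact Finsupp.mem_support_iff.mp hg₀ h1

theorem toWord_of_mul {n : ℕ} (i : Fin n) (g : FreeGroup (Fin n)) :
    (FreeGroup.of i * g).toWord =
      if g.toWord.head? = some (i, false) then g.toWord.tail else (i, true) :: g.toWord := by
  conv_lhs => rw [← FreeGroup.mk_toWord (x := g)]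
  rw [of_mul_mk, FreeGroup.toWord_mk, FreeGroup.reduce.cons]
  rw [FreeGroup.reduce_toWord]
  cases hw : g.toWord with
  | nil => simp
  | cons hd tl =>
      obtain ⟨j, b⟩ := hd
      simp only [List.head?_cons, List.tail_cons]
      by_cases hij : i = j
      · subst hij
        cases b
        · simp
        · simp
      · have : ¬ ((i,true).1 = (j,b).1 ∧ (i,true).2 = !(j,b).2) := fun hc => hij hc.1
        rw [if_neg this]
        refine (if_neg ?_).symm
        intro hc
        injection hc with h1
        injection h1 with h2 h3
        exact hij h2.symm

theorem magnus'_D_zero {n : ℕ} {f : MonoidAlgebra ℤ (FreeGroup (Fin n))}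
    (hK : magnus' n f = 0) (i : Fin n) : magnus' n (D i f) = 0 := by
  funext w
  rw [← magnus'_cons]
  exact congr_fun hK (i :: w)

theorem magnus'_injAux {n : ℕ} : ∀ (M : ℕ) (f : MonoidAlgebra ℤ (FreeGroup (Fin n))),
    magnus' n f = 0 → (∀ g ∈ f.coeff.support, g.toWord.length ≤ M) → f = 0 := by
  intro M
  induction M using Nat.strong_induction_on with
  | _ M ihM =>
  classical
  -- key: if no maximal-length support element has a negative head, then f = 0
  have key : ∀ φ : MonoidAlgebra ℤ (FreeGroup (Fin n)), magnus' n φ = 0 →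
      (∀ g ∈ φ.coeff.support, g.toWord.length ≤ M) →
      (∀ g ∈ φ.coeff.support, g.toWord.length = M →
        ∀ j : Fin n, ¬ g.toWord.head? = some (j, false)) → φ = 0 := by
    intro φ hKφ hφM hφtop
    have hD0 : ∀ j : Fin n, D j φ = 0 := by
      intro j
      by_cases h0 : D j φ = 0
      · exact h0
      · have hsupp : ∀ g₀ ∈ (D j φ).coeff.support, g₀.toWord.length < M := by
          intro g₀ hg₀
          rcases lt_or_ge g₀.toWord.length M with h | h
          · exact h
          · exfalso
            have hval := D_apply_ge j φ hφM g₀ h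
            have hne := Finsupp.mem_support_iff.mp hg₀
            rw [hval] at hne
            by_cases hh : g₀.toWord.head? = some (j, false)
            · rw [if_pos hh] at hne
              have hfne : φ.coeff g₀ ≠ 0 := fun hz => hne (by rw [hz, neg_zero])
              have hmem : g₀ ∈ φ.coeff.support := Finsupp.mem_support_iff.mpr hfne
              exact hφtop g₀ hmem (le_antisymm (hφM g₀ hmem) h) j hh
            · rw [if_neg hh] at hne
              exact hne rfl
        have hMpos : 0 < M := by
          obtain ⟨g₀, hg₀⟩ := Finsupp.support_nonempty_iff.mpr (mt MonoidAlgebra.coeff_eq_zero.mp h0)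
          exact lt_of_le_of_lt (Nat.zero_le _) (hsupp g₀ hg₀)
        exact ihM (M - 1) (by omega) (D j φ) (magnus'_D_zero hKφ j)
          (fun g hg => by have := hsupp g hg; omega)
    have hfund := fund φ
    rw [congr_fun hKφ [], Pi.zero_apply] at hfund
    simp only [hD0, mul_zero, Finset.sum_const_zero, zero_smul, zero_add, add_zero] at hfund
    exact hfund
  -- inner induction on the number of maximal-length support elements
  have inner : ∀ (c : ℕ) (f : MonoidAlgebra ℤ (FreeGroup (Fin n))),
      magnus' n f = 0 → (∀ g ∈ f.coeff.support, g.toWord.length ≤ M) →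
      (f.coeff.support.filter fun g => g.toWord.length = M).card ≤ c → f = 0 := by
    intro c
    induction c with
    | zero =>
        intro f hK hfM hc
        apply key f hK hfM
        intro g hg hgM j _
        have : g ∈ f.coeff.support.filter fun g => g.toWord.length = M :=
          Finset.mem_filter.mpr ⟨hg, hgM⟩
        have := Finset.card_pos.mpr ⟨g, this⟩
        omega
    | succ c ihc =>
        intro f hK hfM hc
        by_cases hQ : ∃ j : Fin n, ∃ g ∈ f.coeff.support.filter fun g => g.toWord.length = M,
            g.toWord.head? = some (j, false)
        · obtain ⟨j, gstar, hgT, hghead⟩ := hQ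
          obtain ⟨hgsupp, hglen⟩ := Finset.mem_filter.mp hgT
          by_cases hTT : ∀ g ∈ f.coeff.support.filter fun g => g.toWord.length = M,
              g.toWord.head? = some (j, false)
          · -- all tops have head (j, false): multiply by of j on the left
            set h := MonoidAlgebra.single (FreeGroup.of j) (1 : ℤ) * f with hh
            have hKh : magnus' n h = 0 := by
              funext w
              rw [Pi.zero_apply, hh, magnus'_mul]
              apply Finset.sum_eq_zero
              intro k _
              rw [congr_fun hK, Pi.zero_apply, mul_zero]
            have happly : ∀ g₀, h.coeff g₀ = f.coeff ((FreeGroup.of j)⁻¹ * g₀) := by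
              intro g₀
              rw [hh, MonoidAlgebra.coeff_single_mul_apply, one_mul]
            have hbound : ∀ g₀ ∈ h.coeff.support, g₀.toWord.length ≤ M ∧
                (g₀.toWord.length = M → g₀.toWord.head? = some (j, true)) := by
              intro g₀ hg₀
              have hne0 : f.coeff ((FreeGroup.of j)⁻¹ * g₀) ≠ 0 := by
                rw [← happly]
                exact Finsupp.mem_support_iff.mp hg₀
              set g₁ := (FreeGroup.of j)⁻¹ * g₀ with hg₁
              have hmem₁ : g₁ ∈ f.coeff.support := Finsupp.mem_support_iff.mpr hne0
              have hlen₁ : g₁.toWord.length ≤ M := hfM g₁ hmem₁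
              have hg₀₁ : g₀ = FreeGroup.of j * g₁ := by
                rw [hg₁, ← mul_assoc, mul_inv_cancel, one_mul]
              have htw := toWord_of_mul j g₁
              rw [← hg₀₁] at htw
              by_cases hh1 : g₁.toWord.head? = some (j, false)
              · rw [if_pos hh1] at htw
                have hlt : 0 < g₁.toWord.length := by
                  cases hw : g₁.toWord with
                  | nil => rw [hw] at hh1; exact absurd hh1 (by simp)
                  | cons a t => simp [hw]
                have : g₀.toWord.length = g₁.toWord.length - 1 := by
                  rw [htw, List.length_tail]
                constructor
                · omega
                · intro hM; omega
              · rw [if_neg hh1] at htw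
                have hlen₁' : g₁.toWord.length < M := by
                  rcases lt_or_eq_of_le hlen₁ with h | h
                  · exact h
                  · exfalso
                    exact hh1 (hTT g₁ (Finset.mem_filter.mpr ⟨hmem₁, h⟩))
                have : g₀.toWord.length = g₁.toWord.length + 1 := by
                  rw [htw, List.length_cons]
                constructor
                · omega
                · intro _
                  rw [htw, List.head?_cons]
            have hzero : h = 0 := by
              apply key h hKh (fun g hg => (hbound g hg).1)
              intro g hg hgM j' hc'
              rw [(hbound g hg).2 hgM] at hc'
              injection hc' with h1
              injection h1 with h2 h3
              exact Bool.noConfusion h3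
            have hfh : MonoidAlgebra.single ((FreeGroup.of j)⁻¹) (1 : ℤ) * h = f := by
              rw [hh, ← mul_assoc, MonoidAlgebra.single_mul_single, inv_mul_cancel, one_mul,
                ← MonoidAlgebra.one_def, one_mul]
            rw [← hfh, hzero, mul_zero]
          · -- some top is not (j,false)-headed: recurse on D j f
            push_neg at hTT
            have hKD : magnus' n (D j f) = 0 := magnus'_D_zero hK j
            have hDbound : ∀ g₀ ∈ (D j f).coeff.support, g₀.toWord.length ≤ M :=
              D_support_le j f hfM
            have hfilter : ((D j f).coeff.support.filter fun g => g.toWord.length = M) =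
                (f.coeff.support.filter fun g => g.toWord.length = M).filter
                  fun g => g.toWord.head? = some (j, false) := by
              ext g₀
              simp only [Finset.mem_filter, Finsupp.mem_support_iff]
              constructor
              · rintro ⟨hne, hlen⟩
                rw [D_apply_ge j f hfM g₀ (le_of_eq hlen.symm)] at hne
                by_cases hhd : g₀.toWord.head? = some (j, false)
                · rw [if_pos hhd] at hne
                  exact ⟨⟨fun hz => hne (by rw [hz, neg_zero]), hlen⟩, hhd⟩
                · rw [if_neg hhd] at hne
                  exact absurd rfl hne
              · rintro ⟨⟨hne, hlen⟩, hhd⟩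
                refine ⟨?_, hlen⟩
                rw [D_apply_ge j f hfM g₀ (le_of_eq hlen.symm), if_pos hhd]
                simpa using hne
            have hcard : ((D j f).coeff.support.filter fun g => g.toWord.length = M).card ≤ c := by
              rw [hfilter]
              obtain ⟨g₂, hg₂, hg₂head⟩ := hTT
              have hssub : ((f.coeff.support.filter fun g => g.toWord.length = M).filter
                  fun g => g.toWord.head? = some (j, false)) ⊂
                  (f.coeff.support.filter fun g => g.toWord.length = M) := by
                refine Finset.ssubset_iff_of_subset (Finset.filter_subset _ _) |>.mpr ?_
                exact ⟨g₂, hg₂, by simp [hg₂head]⟩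
              have := Finset.card_lt_card hssub
              omega
            have hD0 : D j f = 0 := ihc (D j f) hKD hDbound hcard
            -- but (D j f) gstar = -f gstar ≠ 0
            exfalso
            have hval := D_apply_ge j f hfM gstar (le_of_eq hglen.symm)
            rw [hD0, if_pos hghead] at hval
            have : f.coeff gstar = 0 := by
              have := hval.symm
              simpa using this
            exact Finsupp.mem_support_iff.mp hgsupp this
        · apply key f hK hfM
          intro g hg hgM j' hhead
          exact hQ ⟨j', g, Finset.mem_filter.mpr ⟨hg, hgM⟩, hhead⟩
  intro f hK hfM
  exact inner ((f.coeff.support.filter fun g => g.toWord.length = M).card) f hK hfM le_rfl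

/-- The coefficientwise form of the algebra morphism
`r : ℤG → ℤ⟨⟨x₁,…,xₙ⟩⟩` induced by `gᵢ ↦ 1 + xᵢ`: the element `f` of the group ring is
sent to the family of coefficients of the noncommutative formal power series `r f`,
indexed by words in the variables. -/
def magnus (n : ℕ) (f : MonoidAlgebra ℤ (FreeGroup (Fin n))) : List (Fin n) → ℤ :=
  fun w => f.coeff.sum fun g z => z * Ecoef g.toWord w

/-- the algebra morphism `r : ℤG → ℤ⟨⟨x₁,…,xₙ⟩⟩`, `gᵢ ↦ 1 + xᵢ`, from the
group ring of the free group on `n` generators to noncommutative formal power series over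
`ℤ` is injective.  (A power series is given by its family of coefficients; `magnus` is a
ring morphism for the convolution product, as recorded in the first two clauses.) -/
theorem magnus_injective (n : ℕ) :
    (magnus n 1 = fun w => if w = [] then 1 else 0) ∧
    (∀ f f' w, magnus n (f * f') w =
      ∑ i ∈ Finset.range (w.length + 1),
        magnus n f (w.take i) * magnus n f' (w.drop i)) ∧
    Function.Injective (magnus n) := by
  have hmm : magnus n = magnus' n := rfl
  refine ⟨?_, ?_, ?_⟩
  · rw [hmm]; exact magnus'_one
  · rw [hmm]; exact fun f f' w => magnus'_mul f f' w
  · rw [hmm]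
    intro f f' hff
    have hsub : magnus' n (f - f') = 0 := by
      funext w
      rw [Pi.zero_apply, magnus'_sub, congr_fun hff w, sub_self]
    have := magnus'_injAux ((f - f').coeff.support.sup fun g => g.toWord.length) (f - f') hsub
      (fun g hg => Finset.le_sup (f := fun g => g.toWord.length) hg)
    exact sub_eq_zero.mp this

end
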